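/- Let A > 0, ω > 0, K > 0 with A²ω² < 1, and set u(x) = (1 − A⁴ω²x²)/A² and P(x) = 2A²(1 − A²ω²)/(1 − A⁴ω²x²). Then: (1) for all x with |x| < 1/(A²ω), u''(x) − P(x) u(x) = −2 (i.e., u solves the Schrödinger-type equation u'' + (E − P)u = −(nk/2)u^((4−n)/n) with E = 0, n = 4, k = 1); and (2) the function σ(t) = tanh(ωt)/(A²ω) satisfies σ'(t) = u(σ(t)) for all t ∈ ℝ, and u(σ(t)) = (A cosh(ωt))^(−2). -/

import Mathlib

open Real

lemma tanh_hasDerivAt (x : ℝ) :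
    HasDerivAt Real.tanh (1 / Real.cosh x ^ 2) x := by
  have h : HasDerivAt (fun y => Real.sinh y / Real.cosh y)
      ((Real.cosh x * Real.cosh x - Real.sinh x * Real.sinh x) / Real.cosh x ^ 2) x :=
    (Real.hasDerivAt_sinh x).div (Real.hasDerivAt_cosh x) (Real.cosh_pos x).ne'
  have heq : (Real.cosh x * Real.cosh x - Real.sinh x * Real.sinh x) / Real.cosh x ^ 2
      = 1 / Real.cosh x ^ 2 := by
    rw [show Real.cosh x * Real.cosh x - Real.sinh x * Real.sinh x
        = Real.cosh x ^ 2 - Real.sinh x ^ 2 by ring, Real.cosh_sq_sub_sinh_sq]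
  rw [heq] at h
  have : Real.tanh = fun y => Real.sinh y / Real.cosh y := by
    funext y; exact Real.tanh_eq_sinh_div_cosh y
  rw [this]
  exact h

/-- The Ellis–Madsen example: u(x) = (1 − A⁴ω²x²)/A² solves the
Schrödinger-type equation with E = 0, n = 4, k = 1 and potential
P(x) = 2A²(1 − A²ω²)/(1 − A⁴ω²x²), and σ(t) = tanh(ωt)/(A²ω) satisfies
σ' = u∘σ with u(σ(t)) = (A cosh(ωt))^(−2). -/
theorem ellis_madsen_schrodinger_solution
    (A ω K : ℝ) (hA : 0 < A) (hω : 0 < ω) (hK : 0 < K)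
    (hAω : A ^ 2 * ω ^ 2 < 1)
    (u P σ : ℝ → ℝ)
    (hu : u = fun x => (1 - A ^ 4 * ω ^ 2 * x ^ 2) / A ^ 2)
    (hP : P = fun x => 2 * A ^ 2 * (1 - A ^ 2 * ω ^ 2) / (1 - A ^ 4 * ω ^ 2 * x ^ 2))
    (hσ : σ = fun t => Real.tanh (ω * t) / (A ^ 2 * ω)) :
    (∀ x : ℝ, |x| < 1 / (A ^ 2 * ω) →
      deriv (deriv u) x - P x * u x = -2) ∧
    (∀ t : ℝ, deriv σ t = u (σ t)) ∧
    (∀ t : ℝ, u (σ t) = ((A * Real.cosh (ω * t)) ^ 2)⁻¹) := by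
  have hA2 : (A : ℝ) ^ 2 ≠ 0 := by positivity
  have hA2ω : 0 < A ^ 2 * ω := by positivity
  -- derivative of u
  have hu' : ∀ x : ℝ, HasDerivAt u (-(2 * A ^ 2 * ω ^ 2) * x) x := by
    intro x
    rw [hu]
    have h := (((hasDerivAt_pow 2 x).const_mul (A ^ 4 * ω ^ 2)).const_sub 1).div_const (A ^ 2)
    refine h.congr_deriv ?_
    push_cast
    field_simp
  have hdu : deriv u = fun x => -(2 * A ^ 2 * ω ^ 2) * x := by
    funext x; exact (hu' x).deriv
  -- third part
  have hcosh : ∀ t : ℝ, u (σ t) = ((A * Real.cosh (ω * t)) ^ 2)⁻¹ := by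
    intro t
    rw [hu, hσ]
    have hc : Real.cosh (ω * t) ≠ 0 := (Real.cosh_pos _).ne'
    have htanh : Real.tanh (ω * t) = Real.sinh (ω * t) / Real.cosh (ω * t) :=
      Real.tanh_eq_sinh_div_cosh _
    have hid : Real.cosh (ω * t) ^ 2 - Real.sinh (ω * t) ^ 2 = 1 :=
      Real.cosh_sq_sub_sinh_sq _
    simp only [htanh]
    field_simp
    linear_combination hid
  refine ⟨?_, ?_, hcosh⟩
  · intro x hx
    have hden : 1 - A ^ 4 * ω ^ 2 * x ^ 2 ≠ 0 := by
      have h1 : A ^ 2 * ω * |x| < 1 := by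
        have := (lt_div_iff₀ hA2ω).mp hx
        linarith [mul_comm (|x|) (A ^ 2 * ω)]
      have h2 : (A ^ 2 * ω * |x|) ^ 2 < 1 := by
        have h0 : 0 ≤ A ^ 2 * ω * |x| := by positivity
        nlinarith
      have heq : A ^ 4 * ω ^ 2 * x ^ 2 = (A ^ 2 * ω * |x|) ^ 2 := by
        rw [mul_pow, mul_pow, sq_abs]; ring
      have : A ^ 4 * ω ^ 2 * x ^ 2 < 1 := heq ▸ h2
      linarith
    rw [hdu]
    have hd2 : deriv (fun x : ℝ => -(2 * A ^ 2 * ω ^ 2) * x) x = -(2 * A ^ 2 * ω ^ 2) := by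
      simpa using ((hasDerivAt_id x).const_mul (-(2 * A ^ 2 * ω ^ 2))).deriv
    rw [hd2, hP, hu]
    field_simp
    ring
  · intro t
    have hdσ : HasDerivAt σ ((1 / Real.cosh (ω * t) ^ 2 * (ω * 1)) / (A ^ 2 * ω)) t := by
      rw [hσ]
      exact (((tanh_hasDerivAt (ω * t)).comp t ((hasDerivAt_id t).const_mul ω)).div_const _)
    rw [hdσ.deriv, hcosh t]
    have hc : Real.cosh (ω * t) ≠ 0 := (Real.cosh_pos _).ne'
    field_simp
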